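/- Let u, ρ, σ, τ ∈ ℂ with |u| = 1, and define R₁ = [[u², ρ, −u·conj(τ)],[0, conj(u), 0],[0, 0, conj(u)]], R₂ = [[conj(u), 0, 0],[−u·conj(ρ), u², σ],[0, 0, conj(u)]], R₃ = [[conj(u), 0, 0],[0, conj(u), 0],[τ, −u·conj(σ), u²]]. Let H be the Hermitian matrix with diagonal α = 2 − u³ − conj(u)³ and entries H₁₂ = β₁ = (conj(u)² − u)ρ, H₂₃ = β₂ = (conj(u)² − u)σ, H₃₁ = β₃ = (conj(u)² − u)τ (and conjugates symmetrically). Then det(Rᵢ) = 1 and conj(Rᵢ)ᵗ H Rᵢ = H for i = 1, 2, 3. -/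

import Mathlib

open Matrix Complex

set_option maxHeartbeats 2000000 in
theorem stmt18 (u ρ σ τ : ℂ) (hu : ‖u‖ = 1)
    (α β₁ β₂ β₃ : ℂ)
    (hα : α = 2 - u ^ 3 - (starRingEnd ℂ u) ^ 3)
    (hβ₁ : β₁ = ((starRingEnd ℂ u) ^ 2 - u) * ρ)
    (hβ₂ : β₂ = ((starRingEnd ℂ u) ^ 2 - u) * σ)
    (hβ₃ : β₃ = ((starRingEnd ℂ u) ^ 2 - u) * τ)
    (H R₁ R₂ R₃ : Matrix (Fin 3) (Fin 3) ℂ)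
    (hH : H = !![α, β₁, starRingEnd ℂ β₃;
                 starRingEnd ℂ β₁, α, β₂;
                 β₃, starRingEnd ℂ β₂, α])
    (hR₁ : R₁ = !![u ^ 2, ρ, -u * starRingEnd ℂ τ;
                   0, starRingEnd ℂ u, 0;
                   0, 0, starRingEnd ℂ u])
    (hR₂ : R₂ = !![starRingEnd ℂ u, 0, 0;
                   -u * starRingEnd ℂ ρ, u ^ 2, σ;
                   0, 0, starRingEnd ℂ u])
    (hR₃ : R₃ = !![starRingEnd ℂ u, 0, 0;
                   0, starRingEnd ℂ u, 0;
                   τ, -u * starRingEnd ℂ σ, u ^ 2]) :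
    (R₁.det = 1 ∧ R₁.conjTranspose * H * R₁ = H) ∧
      (R₂.det = 1 ∧ R₂.conjTranspose * H * R₂ = H) ∧
      (R₃.det = 1 ∧ R₃.conjTranspose * H * R₃ = H) := by
  have hu0 : u ≠ 0 := by
    intro h; rw [h] at hu; simp at hu
  have h1 : u * starRingEnd ℂ u = 1 := by
    rw [Complex.mul_conj, Complex.normSq_eq_norm_sq, hu]; norm_num
  subst hα hβ₁ hβ₂ hβ₃ hH hR₁ hR₂ hR₃
  refine ⟨⟨?_, ?_⟩, ⟨?_, ?_⟩, ?_, ?_⟩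
  · (simp [Matrix.det_fin_three, Matrix.vecHead, Matrix.vecTail]
     linear_combination (u * starRingEnd ℂ u + 1) * h1)
  · (ext i j
     fin_cases i <;> fin_cases j <;>
       simp [Matrix.mul_apply, Matrix.conjTranspose_apply, Fin.sum_univ_three,
         Matrix.vecHead, Matrix.vecTail] <;>
       first
        | linear_combination (2 + (-1) * (starRingEnd ℂ u) ^ 3 + 2 * u * (starRingEnd ℂ u) + (-1) * u * (starRingEnd ℂ u) ^ 4 + (-1) * u ^ 3 + (-1) * u ^ 4 * (starRingEnd ℂ u)) * h1
        | linear_combination ((-1) * (starRingEnd ℂ u) ^ 2 * ρ + (-1) * u * ρ + (-1) * u ^ 2 * (starRingEnd ℂ u) * ρ) * h1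
        | linear_combination ((-1) * (starRingEnd ℂ u) * (starRingEnd ℂ τ) + (starRingEnd ℂ u) ^ 4 * (starRingEnd ℂ τ) + u * (starRingEnd ℂ u) ^ 2 * (starRingEnd ℂ τ) + u ^ 2 * (starRingEnd ℂ τ) + u ^ 3 * (starRingEnd ℂ u) * (starRingEnd ℂ τ)) * h1
        | linear_combination ((-1) * (starRingEnd ℂ u) * (starRingEnd ℂ ρ) + (-1) * u * (starRingEnd ℂ u) ^ 2 * (starRingEnd ℂ ρ) + (-1) * u ^ 2 * (starRingEnd ℂ ρ)) * h1
        | linear_combination (2 + (-2) * ρ * (starRingEnd ℂ ρ) + (-1) * (starRingEnd ℂ u) ^ 3 + (-1) * u ^ 3) * h1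
        | linear_combination ((starRingEnd ℂ u) ^ 2 * (starRingEnd ℂ ρ) * (starRingEnd ℂ τ) + (starRingEnd ℂ u) ^ 2 * σ + 2 * u * (starRingEnd ℂ ρ) * (starRingEnd ℂ τ) + (-1) * u * σ) * h1
        | linear_combination ((starRingEnd ℂ u) ^ 2 * τ + (-1) * u * τ + u * (starRingEnd ℂ u) ^ 3 * τ + u ^ 2 * (starRingEnd ℂ u) * τ + u ^ 4 * τ) * h1
        | linear_combination ((-1) * (starRingEnd ℂ u) * (starRingEnd ℂ σ) + 2 * (starRingEnd ℂ u) * ρ * τ + u ^ 2 * (starRingEnd ℂ σ) + u ^ 2 * ρ * τ) * h1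
        | linear_combination (2 + (-1) * (starRingEnd ℂ u) ^ 3 + (-1) * (starRingEnd ℂ u) ^ 3 * τ * (starRingEnd ℂ τ) + (-2) * u * (starRingEnd ℂ u) * τ * (starRingEnd ℂ τ) + (-1) * u ^ 3 + (-1) * u ^ 3 * τ * (starRingEnd ℂ τ)) * h1)
  · (simp [Matrix.det_fin_three, Matrix.vecHead, Matrix.vecTail]
     linear_combination (u * starRingEnd ℂ u + 1) * h1)
  · (ext i j
     fin_cases i <;> fin_cases j <;>
       simp [Matrix.mul_apply, Matrix.conjTranspose_apply, Fin.sum_univ_three,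
         Matrix.vecHead, Matrix.vecTail] <;>
       first
        | linear_combination (2 + (-1) * (starRingEnd ℂ u) ^ 3 + (-1) * (starRingEnd ℂ u) ^ 3 * ρ * (starRingEnd ℂ ρ) + (-2) * u * (starRingEnd ℂ u) * ρ * (starRingEnd ℂ ρ) + (-1) * u ^ 3 + (-1) * u ^ 3 * ρ * (starRingEnd ℂ ρ)) * h1
        | linear_combination ((starRingEnd ℂ u) ^ 2 * ρ + (-1) * u * ρ + u * (starRingEnd ℂ u) ^ 3 * ρ + u ^ 2 * (starRingEnd ℂ u) * ρ + u ^ 4 * ρ) * h1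
        | linear_combination ((-1) * (starRingEnd ℂ u) * (starRingEnd ℂ τ) + 2 * (starRingEnd ℂ u) * ρ * σ + u ^ 2 * (starRingEnd ℂ τ) + u ^ 2 * ρ * σ) * h1
        | linear_combination ((-1) * (starRingEnd ℂ u) * (starRingEnd ℂ ρ) + (starRingEnd ℂ u) ^ 4 * (starRingEnd ℂ ρ) + u * (starRingEnd ℂ u) ^ 2 * (starRingEnd ℂ ρ) + u ^ 2 * (starRingEnd ℂ ρ) + u ^ 3 * (starRingEnd ℂ u) * (starRingEnd ℂ ρ)) * h1
        | linear_combination (2 + (-1) * (starRingEnd ℂ u) ^ 3 + 2 * u * (starRingEnd ℂ u) + (-1) * u * (starRingEnd ℂ u) ^ 4 + (-1) * u ^ 3 + (-1) * u ^ 4 * (starRingEnd ℂ u)) * h1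
        | linear_combination ((-1) * (starRingEnd ℂ u) ^ 2 * σ + (-1) * u * σ + (-1) * u ^ 2 * (starRingEnd ℂ u) * σ) * h1
        | linear_combination ((starRingEnd ℂ u) ^ 2 * (starRingEnd ℂ ρ) * (starRingEnd ℂ σ) + (starRingEnd ℂ u) ^ 2 * τ + 2 * u * (starRingEnd ℂ ρ) * (starRingEnd ℂ σ) + (-1) * u * τ) * h1
        | linear_combination ((-1) * (starRingEnd ℂ u) * (starRingEnd ℂ σ) + (-1) * u * (starRingEnd ℂ u) ^ 2 * (starRingEnd ℂ σ) + (-1) * u ^ 2 * (starRingEnd ℂ σ)) * h1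
        | linear_combination (2 + (-2) * σ * (starRingEnd ℂ σ) + (-1) * (starRingEnd ℂ u) ^ 3 + (-1) * u ^ 3) * h1)
  · (simp [Matrix.det_fin_three, Matrix.vecHead, Matrix.vecTail]
     linear_combination (u * starRingEnd ℂ u + 1) * h1)
  · (ext i j
     fin_cases i <;> fin_cases j <;>
       simp [Matrix.mul_apply, Matrix.conjTranspose_apply, Fin.sum_univ_three,
         Matrix.vecHead, Matrix.vecTail] <;>
       first
        | linear_combination (2 + (-2) * τ * (starRingEnd ℂ τ) + (-1) * (starRingEnd ℂ u) ^ 3 + (-1) * u ^ 3) * h1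
        | linear_combination ((starRingEnd ℂ u) ^ 2 * (starRingEnd ℂ σ) * (starRingEnd ℂ τ) + (starRingEnd ℂ u) ^ 2 * ρ + 2 * u * (starRingEnd ℂ σ) * (starRingEnd ℂ τ) + (-1) * u * ρ) * h1
        | linear_combination ((-1) * (starRingEnd ℂ u) * (starRingEnd ℂ τ) + (-1) * u * (starRingEnd ℂ u) ^ 2 * (starRingEnd ℂ τ) + (-1) * u ^ 2 * (starRingEnd ℂ τ)) * h1
        | linear_combination ((-1) * (starRingEnd ℂ u) * (starRingEnd ℂ ρ) + 2 * (starRingEnd ℂ u) * σ * τ + u ^ 2 * (starRingEnd ℂ ρ) + u ^ 2 * σ * τ) * h1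
        | linear_combination (2 + (-1) * (starRingEnd ℂ u) ^ 3 + (-1) * (starRingEnd ℂ u) ^ 3 * σ * (starRingEnd ℂ σ) + (-2) * u * (starRingEnd ℂ u) * σ * (starRingEnd ℂ σ) + (-1) * u ^ 3 + (-1) * u ^ 3 * σ * (starRingEnd ℂ σ)) * h1
        | linear_combination ((starRingEnd ℂ u) ^ 2 * σ + (-1) * u * σ + u * (starRingEnd ℂ u) ^ 3 * σ + u ^ 2 * (starRingEnd ℂ u) * σ + u ^ 4 * σ) * h1
        | linear_combination ((-1) * (starRingEnd ℂ u) ^ 2 * τ + (-1) * u * τ + (-1) * u ^ 2 * (starRingEnd ℂ u) * τ) * h1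
        | linear_combination ((-1) * (starRingEnd ℂ u) * (starRingEnd ℂ σ) + (starRingEnd ℂ u) ^ 4 * (starRingEnd ℂ σ) + u * (starRingEnd ℂ u) ^ 2 * (starRingEnd ℂ σ) + u ^ 2 * (starRingEnd ℂ σ) + u ^ 3 * (starRingEnd ℂ u) * (starRingEnd ℂ σ)) * h1
        | linear_combination (2 + (-1) * (starRingEnd ℂ u) ^ 3 + 2 * u * (starRingEnd ℂ u) + (-1) * u * (starRingEnd ℂ u) ^ 4 + (-1) * u ^ 3 + (-1) * u ^ 4 * (starRingEnd ℂ u)) * h1)
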